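/- arXiv:1108.5699 — 3 statements merged into one kernel-verified Lean document; each statement's English description precedes it below -/
import Mathlib

section
/- Let δ, ε > 0 and let J^μ be a weighted graph such that s(K2; J^μ) ≤ δ and μ({u : uv ∈ E(J)}) ≤ ε for every vertex v ∈ V(J). Let Z = (z1, …, zr) be r vertices of J chosen independently at random according to μ. Then for every integer s ≥ 1, the probability that there is a chosen position a and s other chosen positions b1, …, bs such that the vertex at a is adjacent in J to the vertices at each of b1, …, bs (i.e., the sampled induced subgraph contains a vertex of degree at least s) is at most 3^r · δ · ε^{s−1}. -/
open Finset
open scoped Classical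

def IsStrongHom {α β : Type} (H : SimpleGraph α) (G : SimpleGraph β) (φ : α → β) : Prop :=
  ∀ u v : α, H.Adj u v ↔ G.Adj (φ u) (φ v)

def SimpleGraph.blowup {α : Type} (H : SimpleGraph α) (k : α → ℕ) :
    SimpleGraph (Σ v : α, Fin (k v)) where
  Adj x y := H.Adj x.1 y.1
  symm := ⟨fun _ _ h => H.adj_symm h⟩
  loopless := ⟨fun x h => H.irrefl (v := x.1) h⟩

def IsWeight {β : Type} [Fintype β] (μ : β → ℝ) : Prop :=
  (∀ v, 0 < μ v) ∧ ∑ v, μ v = 1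

noncomputable def sdensity {α β : Type} [Fintype α] [Fintype β]
    (H : SimpleGraph α) (G : SimpleGraph β) (μ : β → ℝ) : ℝ :=
  ∑ ψ : α → β, if IsStrongHom H G ψ then ∏ v : α, μ (ψ v) else 0

def IsTwinFree {α : Type} (G : SimpleGraph α) : Prop :=
  ∀ u v : α, (∀ w, G.Adj u w ↔ G.Adj v w) → u = v

def WEquiv {α β : Type} [Fintype α] [Fintype β]
    (G1 : SimpleGraph α) (μ1 : α → ℝ) (G2 : SimpleGraph β) (μ2 : β → ℝ) : Prop :=
  ∃ (m : ℕ) (T : SimpleGraph (Fin m)) (π1 : α → Fin m) (π2 : β → Fin m),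
    IsTwinFree T ∧ IsStrongHom G1 T π1 ∧ IsStrongHom G2 T π2 ∧
    Function.Surjective π1 ∧ Function.Surjective π2 ∧
    ∀ t : Fin m,
      (∑ u ∈ Finset.univ.filter (fun u => π1 u = t), μ1 u) =
        ∑ u ∈ Finset.univ.filter (fun u => π2 u = t), μ2 u

noncomputable def d1dist {α β : Type} [Fintype α] [Fintype β]
    (G1 : SimpleGraph α) (μ1 : α → ℝ) (G2 : SimpleGraph β) (μ2 : β → ℝ) : ℝ :=
  sInf {x : ℝ | ∃ (m : ℕ) (F1 F2 : SimpleGraph (Fin m)) (μ : Fin m → ℝ),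
    IsWeight μ ∧ WEquiv F1 μ G1 μ1 ∧ WEquiv F2 μ G2 μ2 ∧
    x = ∑ u : Fin m, ∑ v : Fin m, μ u * μ v *
      |(if F1.Adj u v then (1:ℝ) else 0) - (if F2.Adj u v then (1:ℝ) else 0)|}

noncomputable def sdensityP {α β : Type} [Fintype α] [Fintype β]
    (H : SimpleGraph α) (u0 : α) (G : SimpleGraph β) (v0 : β) (μ : β → ℝ) : ℝ :=
  ∑ ψ : α → β, if ψ u0 = v0 ∧ IsStrongHom H G ψ
    then ∏ v ∈ Finset.univ.erase u0, μ (ψ v) else 0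

def GraphBalanced {α : Type} [Fintype α] (H : SimpleGraph α) : Prop :=
  ∃ (m : ℕ) (Ht : SimpleGraph (Fin m)) (k : Fin m → ℕ),
    (∀ v, 0 < k v) ∧ IsTwinFree Ht ∧ Nonempty (H ≃g Ht.blowup k) ∧
    ∀ σ : Ht ≃g Ht, ∀ v, k (σ v) = k v


section helper

private lemma sum_univ_congr {γ : Type} (F1 F2 : Fintype γ) (f : γ → ℝ) :
    @Finset.sum γ ℝ _ (@Finset.univ γ F1) f = @Finset.sum γ ℝ _ (@Finset.univ γ F2) f := by
  cases Subsingleton.elim F1 F2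
  rfl

private lemma choose_le_two_pow (n k : ℕ) : Nat.choose n k ≤ 2 ^ n := by
  rcases le_or_gt k n with h | h
  · calc Nat.choose n k ≤ ∑ i ∈ Finset.range (n+1), Nat.choose n i :=
          Finset.single_le_sum (fun _ _ => Nat.zero_le _) (Finset.mem_range.2 (by omega))
    _ = 2 ^ n := Nat.sum_range_choose n
  · rw [Nat.choose_eq_zero_of_lt h]; exact Nat.zero_le _

private lemma mul_two_pow_le (r : ℕ) : r * 2 ^ r ≤ 2 * 3 ^ r := by
  induction r with
  | zero => simp
  | succ n ih =>
      have h1 : (n+1) * 2 ^ (n+1) = 2 * (n * 2 ^ n) + 2 * 2 ^ n := by ring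
      rw [h1]
      have h2 : (2:ℕ) ^ n ≤ 3 ^ n := Nat.pow_le_pow_left (by norm_num) n
      calc 2 * (n * 2 ^ n) + 2 * 2 ^ n ≤ 2 * (2 * 3 ^ n) + 2 * 3 ^ n :=
            Nat.add_le_add (Nat.mul_le_mul_left 2 ih) (Nat.mul_le_mul_left 2 h2)
        _ = 2 * 3 ^ (n+1) := by ring

private lemma count_bound (r s : ℕ) : r * Nat.choose (r - 1) s ≤ 3 ^ r := by
  rcases Nat.eq_zero_or_pos r with rfl | hr
  · simp
  obtain ⟨m, rfl⟩ : ∃ m, r = m + 1 := ⟨r - 1, by omega⟩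
  have h1 : Nat.choose m s ≤ 2 ^ m := choose_le_two_pow _ _
  have h2 : (m+1) * 2 ^ m ≤ 3 ^ (m+1) := by
    have h3 := mul_two_pow_le (m+1)
    have he : (m+1) * 2 ^ (m+1) = 2 * ((m+1) * 2 ^ m) := by ring
    rw [he] at h3
    exact Nat.le_of_mul_le_mul_left h3 (by norm_num)
  simp only [Nat.add_sub_cancel]
  calc (m+1) * Nat.choose m s ≤ (m+1) * 2 ^ m := Nat.mul_le_mul_left _ h1
    _ ≤ 3 ^ (m+1) := h2

end helper

theorem stmt5 {β : Type} [Fintype β] (J : SimpleGraph β) (μ : β → ℝ) (hμ : IsWeight μ)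
    (δ ε : ℝ) (hδ : 0 < δ) (hε : 0 < ε)
    (hedge : sdensity (SimpleGraph.completeGraph (Fin 2)) J μ ≤ δ)
    (hdeg : ∀ v : β, ∑ u ∈ Finset.univ.filter (fun u => J.Adj v u), μ u ≤ ε)
    (r s : ℕ) (hs : 1 ≤ s) :
    ∑ z : Fin r → β,
      (if ∃ (a : Fin r) (b : Fin s → Fin r), Function.Injective b ∧ (∀ i, b i ≠ a) ∧
            ∀ i, J.Adj (z a) (z (b i))
        then ∏ i : Fin r, μ (z i) else 0) ≤ 3 ^ r * δ * ε ^ (s - 1) := by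
  obtain ⟨hμpos, hμsum⟩ := hμ
  set N : β → ℝ := fun v => ∑ u ∈ Finset.univ.filter (fun u => J.Adj v u), μ u with hN
  have hN0 : ∀ v, 0 ≤ N v := fun v =>
    Finset.sum_nonneg fun u _ => (hμpos u).le
  have hNε : ∀ v, N v ≤ ε := hdeg
  have hNsum : ∀ v : β, (∑ x : β, if J.Adj v x then μ x else 0) = N v := by
    intro v
    simp only [hN]
    exact (Finset.sum_filter _ _).symm
  -- density computation
  have hdens : sdensity (SimpleGraph.completeGraph (Fin 2)) J μ = ∑ v : β, μ v * N v := by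
    unfold sdensity
    have key : ∀ ψ : Fin 2 → β,
        (if IsStrongHom (SimpleGraph.completeGraph (Fin 2)) J ψ then ∏ v : Fin 2, μ (ψ v) else 0)
          = (if J.Adj (ψ 0) (ψ 1) then μ (ψ 0) * μ (ψ 1) else 0) := by
      intro ψ
      have hhom : IsStrongHom (SimpleGraph.completeGraph (Fin 2)) J ψ ↔ J.Adj (ψ 0) (ψ 1) := by
        constructor
        · intro h
          exact (h 0 1).1 (by simp [SimpleGraph.completeGraph])
        · intro h u v
          fin_cases u <;> fin_cases v <;>
            simp [SimpleGraph.completeGraph, h, h.symm]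
      by_cases h : J.Adj (ψ 0) (ψ 1)
      · rw [if_pos h, if_pos (hhom.2 h), Fin.prod_univ_two]
      · rw [if_neg h, if_neg (fun hc => h (hhom.1 hc))]
    simp only [key]
    refine Eq.trans (sum_univ_congr _ (by infer_instance) _) ?_
    refine Eq.trans (Fintype.sum_equiv (piFinTwoEquiv (fun _ => β))
      _ (fun p : β × β => if J.Adj p.1 p.2 then μ p.1 * μ p.2 else 0) (fun ψ => rfl)) ?_
    rw [Fintype.sum_prod_type]
    refine Finset.sum_congr rfl fun x _ => ?_
    rw [← hNsum x, Finset.mul_sum]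
    exact Finset.sum_congr rfl fun y _ => by split <;> simp
  have hδN : ∑ v : β, μ v * N v ≤ δ := hdens ▸ hedge
  -- key bound for fixed a, B
  have keyB : ∀ (a : Fin r) (B : Finset (Fin r)), a ∉ B → B.card = s →
      (∑ z : Fin r → β, if ∀ b ∈ B, J.Adj (z a) (z b) then ∏ i, μ (z i) else 0)
        ≤ δ * ε ^ (s - 1) := by
    intro a B haB hBcard
    have step1 : (∑ z : Fin r → β, if ∀ b ∈ B, J.Adj (z a) (z b) then ∏ i, μ (z i) else 0)
        = ∑ v : β, μ v * (N v) ^ s := by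
      have hpt : ∀ z : Fin r → β,
          (if ∀ b ∈ B, J.Adj (z a) (z b) then ∏ i, μ (z i) else 0)
            = ∑ v : β, ∏ i : Fin r,
                ((if i = a then (if z i = v then (1:ℝ) else 0) else 1) *
                 (if i ∈ B then (if J.Adj v (z i) then (1:ℝ) else 0) else 1) * μ (z i)) := by
        intro z
        have hprod : ∀ v : β, (∏ i : Fin r,
              ((if i = a then (if z i = v then (1:ℝ) else 0) else 1) *
               (if i ∈ B then (if J.Adj v (z i) then (1:ℝ) else 0) else 1) * μ (z i)))
            = (if z a = v then (1:ℝ) else 0) *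
              (if ∀ b ∈ B, J.Adj v (z b) then (1:ℝ) else 0) * ∏ i, μ (z i) := by
          intro v
          rw [Finset.prod_mul_distrib, Finset.prod_mul_distrib,
            Finset.prod_ite_eq' Finset.univ a
              (fun i => if z i = v then (1:ℝ) else 0),
            show (∏ i : Fin r, if i ∈ B then (if J.Adj v (z i) then (1:ℝ) else 0) else 1)
                = ∏ i ∈ Finset.univ ∩ B, (if J.Adj v (z i) then (1:ℝ) else 0) from
                Finset.prod_ite_mem _ _ _,
            Finset.univ_inter, Finset.prod_boole]
          simp
        rw [Finset.sum_congr rfl (fun v _ => hprod v)]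
        rw [Finset.sum_eq_single (z a)]
        · by_cases hall : ∀ b ∈ B, J.Adj (z a) (z b) <;> simp [hall]
        · intro v _ hv
          rw [if_neg (fun hc => hv hc.symm), zero_mul, zero_mul]
        · intro h; exact absurd (Finset.mem_univ _) h
      rw [Finset.sum_congr rfl (fun z _ => hpt z), Finset.sum_comm]
      refine Finset.sum_congr rfl fun v _ => ?_
      have hswap := Finset.prod_univ_sum (fun _ : Fin r => (Finset.univ : Finset β))
        (fun i x => ((if i = a then (if x = v then (1:ℝ) else 0) else 1) *
           (if i ∈ B then (if J.Adj v x then (1:ℝ) else 0) else 1) * μ x))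
      rw [Fintype.piFinset_univ] at hswap
      rw [← hswap]
      have hfac : ∀ i : Fin r, (∑ x : β,
            ((if i = a then (if x = v then (1:ℝ) else 0) else 1) *
             (if i ∈ B then (if J.Adj v x then (1:ℝ) else 0) else 1) * μ x))
          = (if i = a then μ v else 1) * (if i ∈ B then N v else 1) := by
        intro i
        by_cases hia : i = a
        · have hiB : i ∉ B := hia ▸ haB
          simp only [if_pos hia, if_neg hiB, mul_one]
          rw [show (∑ x : β, (if x = v then (1:ℝ) else 0) * μ x)
              = ∑ x : β, if x = v then μ x else 0 from
              Finset.sum_congr rfl fun x _ => by split <;> simp]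
          rw [Finset.sum_ite_eq' Finset.univ v μ]
          simp
        · by_cases hiB : i ∈ B
          · simp only [if_neg hia, if_pos hiB, one_mul]
            rw [show (∑ x : β, (if J.Adj v x then (1:ℝ) else 0) * μ x)
                = ∑ x : β, if J.Adj v x then μ x else 0 from
                Finset.sum_congr rfl fun x _ => by split <;> simp]
            exact hNsum v
          · simp only [if_neg hia, if_neg hiB, mul_one, one_mul]
            exact hμsum
      rw [Finset.prod_congr rfl (fun i _ => hfac i), Finset.prod_mul_distrib]
      rw [Finset.prod_ite_eq' Finset.univ a (fun _ => μ v)]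
      rw [show (∏ i : Fin r, if i ∈ B then N v else 1)
            = ∏ i ∈ Finset.univ ∩ B, N v from Finset.prod_ite_mem _ _ _]
      rw [Finset.univ_inter, Finset.prod_const, hBcard]
      simp
    rw [step1]
    have hle : ∀ v : β, μ v * N v ^ s ≤ (μ v * N v) * ε ^ (s - 1) := by
      intro v
      have hss : s = 1 + (s - 1) := by omega
      have hNs : N v ^ s = N v * N v ^ (s-1) := by
        conv_lhs => rw [hss]
        rw [pow_add, pow_one]
      rw [hNs]
      have h2 : N v ^ (s-1) ≤ ε ^ (s-1) := pow_le_pow_left₀ (hN0 v) (hNε v) _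
      have h3 := mul_le_mul_of_nonneg_left h2 (mul_nonneg (hμpos v).le (hN0 v))
      calc μ v * (N v * N v ^ (s-1)) = (μ v * N v) * N v ^ (s-1) := by ring
        _ ≤ (μ v * N v) * ε ^ (s-1) := h3
    calc ∑ v : β, μ v * N v ^ s ≤ ∑ v : β, (μ v * N v) * ε ^ (s-1) :=
          Finset.sum_le_sum fun v _ => hle v
      _ = (∑ v : β, μ v * N v) * ε ^ (s-1) := by rw [← Finset.sum_mul]
      _ ≤ δ * ε ^ (s-1) :=
          mul_le_mul_of_nonneg_right hδN (pow_nonneg hε.le _)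
  -- union bound pointwise
  have hub : ∀ z : Fin r → β,
      (if ∃ (a : Fin r) (b : Fin s → Fin r), Function.Injective b ∧ (∀ i, b i ≠ a) ∧
            ∀ i, J.Adj (z a) (z (b i))
        then ∏ i : Fin r, μ (z i) else 0)
      ≤ ∑ a : Fin r, ∑ B ∈ (Finset.univ.erase a).powersetCard s,
          (if ∀ b ∈ B, J.Adj (z a) (z b) then ∏ i, μ (z i) else 0) := by
    intro z
    have hterm : ∀ (a : Fin r) (B : Finset (Fin r)),
        0 ≤ (if ∀ b ∈ B, J.Adj (z a) (z b) then ∏ i, μ (z i) else 0) := by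
      intro a B
      split
      · exact Finset.prod_nonneg fun i _ => (hμpos _).le
      · exact le_refl 0
    by_cases hE : ∃ (a : Fin r) (b : Fin s → Fin r), Function.Injective b ∧ (∀ i, b i ≠ a) ∧
        ∀ i, J.Adj (z a) (z (b i))
    · rw [if_pos hE]
      obtain ⟨a, b, hinj, hne, hadj⟩ := hE
      set B : Finset (Fin r) := Finset.univ.image b with hB
      have hBmem : B ∈ (Finset.univ.erase a).powersetCard s := by
        rw [Finset.mem_powersetCard]
        constructor
        · intro x hx
          obtain ⟨i, _, rfl⟩ := Finset.mem_image.1 hx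
          exact Finset.mem_erase.2 ⟨hne i, Finset.mem_univ _⟩
        · rw [hB, Finset.card_image_of_injective _ hinj, Finset.card_univ,
            Fintype.card_fin]
      have hcond : ∀ c ∈ B, J.Adj (z a) (z c) := by
        intro c hc
        obtain ⟨i, _, rfl⟩ := Finset.mem_image.1 hc
        exact hadj i
      calc (∏ i : Fin r, μ (z i))
          = (if ∀ c ∈ B, J.Adj (z a) (z c) then ∏ i, μ (z i) else 0) := by
            rw [if_pos hcond]
        _ ≤ ∑ B' ∈ (Finset.univ.erase a).powersetCard s,
              (if ∀ c ∈ B', J.Adj (z a) (z c) then ∏ i, μ (z i) else 0) :=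
            Finset.single_le_sum (fun B' _ => hterm a B') hBmem
        _ ≤ ∑ a' : Fin r, ∑ B' ∈ (Finset.univ.erase a').powersetCard s,
              (if ∀ c ∈ B', J.Adj (z a') (z c) then ∏ i, μ (z i) else 0) :=
            Finset.single_le_sum
              (f := fun a' => ∑ B' ∈ (Finset.univ.erase a').powersetCard s,
                (if ∀ c ∈ B', J.Adj (z a') (z c) then ∏ i, μ (z i) else 0))
              (fun a' _ => Finset.sum_nonneg fun B' _ => hterm a' B')
              (Finset.mem_univ a)
    · rw [if_neg hE]
      exact Finset.sum_nonneg fun a _ => Finset.sum_nonneg fun B _ => hterm a B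
  calc ∑ z : Fin r → β,
        (if ∃ (a : Fin r) (b : Fin s → Fin r), Function.Injective b ∧ (∀ i, b i ≠ a) ∧
              ∀ i, J.Adj (z a) (z (b i))
          then ∏ i : Fin r, μ (z i) else 0)
      ≤ ∑ z : Fin r → β, ∑ a : Fin r, ∑ B ∈ (Finset.univ.erase a).powersetCard s,
          (if ∀ b ∈ B, J.Adj (z a) (z b) then ∏ i, μ (z i) else 0) :=
        Finset.sum_le_sum fun z _ => hub z
    _ = ∑ a : Fin r, ∑ B ∈ (Finset.univ.erase a).powersetCard s,
          ∑ z : Fin r → β, (if ∀ b ∈ B, J.Adj (z a) (z b) then ∏ i, μ (z i) else 0) := by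
        rw [Finset.sum_comm]
        exact Finset.sum_congr rfl fun a _ => Finset.sum_comm
    _ ≤ ∑ a : Fin r, ∑ B ∈ (Finset.univ.erase a).powersetCard s, δ * ε ^ (s-1) := by
        refine Finset.sum_le_sum fun a _ => Finset.sum_le_sum fun B hBm => ?_
        rw [Finset.mem_powersetCard] at hBm
        exact keyB a B (fun hc => (Finset.mem_erase.1 (hBm.1 hc)).1 rfl) hBm.2
    _ = (r * Nat.choose (r-1) s : ℕ) * (δ * ε ^ (s-1)) := by
        simp only [Finset.sum_const, Finset.card_powersetCard,
          Finset.card_erase_of_mem (Finset.mem_univ _), Finset.card_univ, Fintype.card_fin,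
          nsmul_eq_mul]
        push_cast
        ring
    _ ≤ (3 ^ r : ℕ) * (δ * ε ^ (s-1)) := by
        refine mul_le_mul_of_nonneg_right ?_ (by positivity)
        exact_mod_cast count_bound r s
    _ = 3 ^ r * δ * ε ^ (s-1) := by push_cast; ring
end

section
/- Let H̃ be a twin-free graph with |V(H̃)| = k, let k be a vector of positive integers indexed by V(H̃), let n be a positive integer, let G = H̃^(n·k), and let ψ: V(G) → V(H̃) be any map. Then for every γ > 0, either (a) there exists a set X ⊆ V(G) with |X| ≤ γ|V(G)| such that the restriction of ψ to V(G) − X is a strong homomorphism from G[V(G) − X] to H̃, or (b) there exist sets Y1, Y2 ⊆ V(G) with |Y1|, |Y2| ≥ (γ · α(μ_k) / k) · |V(G)| such that for all y1 ∈ Y1 and y2 ∈ Y2, A_G(y1, y2) ≠ A_{H̃}(ψ(y1), ψ(y2)). -/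
open Finset
open scoped Classical

theorem stmt6 {β : Type} [Fintype β] [Nonempty β] (Ht : SimpleGraph β)
    (htf : IsTwinFree Ht) (k : β → ℕ) (hk : ∀ v, 0 < k v) (n : ℕ) (hn : 0 < n)
    (ψ : (Σ v : β, Fin (n * k v)) → β) (γ : ℝ) (hγ : 0 < γ) :
    (∃ X : Finset (Σ v : β, Fin (n * k v)),
        (X.card : ℝ) ≤ γ * Fintype.card (Σ v : β, Fin (n * k v)) ∧
        ∀ u v : (Σ v : β, Fin (n * k v)), u ∉ X → v ∉ X →
          ((Ht.blowup fun v => n * k v).Adj u v ↔ Ht.Adj (ψ u) (ψ v))) ∨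
    (∃ Y1 Y2 : Finset (Σ v : β, Fin (n * k v)),
        γ * (((Finset.univ.inf' Finset.univ_nonempty k : ℕ) : ℝ) / (∑ v : β, (k v : ℝ))) /
            (Fintype.card β) * Fintype.card (Σ v : β, Fin (n * k v)) ≤ Y1.card ∧
        γ * (((Finset.univ.inf' Finset.univ_nonempty k : ℕ) : ℝ) / (∑ v : β, (k v : ℝ))) /
            (Fintype.card β) * Fintype.card (Σ v : β, Fin (n * k v)) ≤ Y2.card ∧
        ∀ y1 ∈ Y1, ∀ y2 ∈ Y2,
          ¬((Ht.blowup fun v => n * k v).Adj y1 y2 ↔ Ht.Adj (ψ y1) (ψ y2))) := by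
  classical
  set t : ℝ := γ * (((Finset.univ.inf' Finset.univ_nonempty k : ℕ) : ℝ) / (∑ v : β, (k v : ℝ))) /
      (Fintype.card β) * Fintype.card (Σ v : β, Fin (n * k v)) with ht
  set S : β → β → Finset (Σ v : β, Fin (n * k v)) :=
    fun a b => Finset.univ.filter (fun u => u.1 = a ∧ ψ u = b) with hS
  by_cases hbig : ∃ a b a' b', t ≤ ((S a b).card : ℝ) ∧ t ≤ ((S a' b').card : ℝ) ∧
      ¬ (Ht.Adj a a' ↔ Ht.Adj b b')
  · obtain ⟨a, b, a', b', h1, h2, h3⟩ := hbig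
    right
    refine ⟨S a b, S a' b', h1, h2, ?_⟩
    intro y1 hy1 y2 hy2
    simp only [hS, Finset.mem_filter] at hy1 hy2
    obtain ⟨-, hy1a, hy1b⟩ := hy1
    obtain ⟨-, hy2a, hy2b⟩ := hy2
    have hadj : (Ht.blowup fun v => n * k v).Adj y1 y2 ↔ Ht.Adj a a' := by
      show Ht.Adj y1.1 y2.1 ↔ _
      rw [hy1a, hy2a]
    rw [hadj, hy1b, hy2b]
    exact h3
  · push_neg at hbig
    left
    set X : Finset (Σ v : β, Fin (n * k v)) :=
      Finset.univ.filter (fun u => ((S u.1 (ψ u)).card : ℝ) < t) with hX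
    have hmemX : ∀ u, u ∉ X → t ≤ ((S u.1 (ψ u)).card : ℝ) := by
      intro u hu
      simp only [hX, Finset.mem_filter, Finset.mem_univ, true_and, not_lt] at hu
      exact hu
    refine ⟨X, ?_, ?_⟩
    · set B : ℝ := (Fintype.card β : ℝ) with hB
      set m : ℝ := ((Finset.univ.inf' Finset.univ_nonempty k : ℕ) : ℝ) with hm
      set s : ℝ := ∑ v : β, (k v : ℝ) with hs
      set V : ℝ := (Fintype.card (Σ v : β, Fin (n * k v)) : ℝ) with hV
      have hBpos : 0 < B := by
        rw [hB]; exact_mod_cast Fintype.card_pos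
      have hspos : 0 < s := by
        rw [hs]
        apply Finset.sum_pos
        · intro v _; exact_mod_cast hk v
        · exact Finset.univ_nonempty
      have hVnn : 0 ≤ V := by rw [hV]; positivity
      have hmnn : 0 ≤ m := by rw [hm]; positivity
      have htnn : 0 ≤ t := by
        rw [ht]
        have := hγ.le
        positivity
      have hBm : B * m ≤ s := by
        have : ∑ _v : β, m ≤ s := by
          rw [hs]
          apply Finset.sum_le_sum
          intro v _
          rw [hm]
          exact_mod_cast Finset.inf'_le k (Finset.mem_univ v)
        simpa [mul_comm] using this
      set P : Finset (β × β) :=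
        (Finset.univ ×ˢ Finset.univ).filter (fun p => ((S p.1 p.2).card : ℝ) < t) with hP
      have hXsub : X ⊆ P.biUnion (fun p => S p.1 p.2) := by
        intro u hu
        simp only [hX, Finset.mem_filter, Finset.mem_univ, true_and] at hu
        refine Finset.mem_biUnion.2 ⟨(u.1, ψ u), ?_, ?_⟩
        · simp only [hP, Finset.mem_filter, Finset.mem_product, Finset.mem_univ, true_and]
          exact hu
        · simp [hS]
      have h1 : (X.card : ℝ) ≤ ∑ p ∈ P, ((S p.1 p.2).card : ℝ) := by
        have := (Finset.card_le_card hXsub).trans Finset.card_biUnion_le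
        exact_mod_cast this
      have h2 : ∑ p ∈ P, ((S p.1 p.2).card : ℝ) ≤ P.card * t := by
        calc ∑ p ∈ P, ((S p.1 p.2).card : ℝ) ≤ ∑ _p ∈ P, t := by
              apply Finset.sum_le_sum
              intro p hp
              simp only [hP, Finset.mem_filter] at hp
              exact hp.2.le
          _ = P.card * t := by rw [Finset.sum_const, nsmul_eq_mul]
      have h3 : (P.card : ℝ) ≤ B ^ 2 := by
        have : P.card ≤ (Fintype.card β) * (Fintype.card β) := by
          calc P.card ≤ (Finset.univ ×ˢ Finset.univ : Finset (β × β)).card :=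
                Finset.card_le_card (Finset.filter_subset _ _)
            _ = (Fintype.card β) * (Fintype.card β) := by
                simp [Finset.card_product]
        rw [hB, sq]
        exact_mod_cast this
      have h4 : B ^ 2 * t ≤ γ * V := by
        have heq : B ^ 2 * t = γ * (B * m / s) * V := by
          rw [ht]
          field_simp [hBpos.ne', hspos.ne']
        rw [heq]
        have hle1 : B * m / s ≤ 1 := (div_le_one hspos).2 hBm
        calc γ * (B * m / s) * V ≤ γ * 1 * V := by
              apply mul_le_mul_of_nonneg_right _ hVnn
              exact mul_le_mul_of_nonneg_left hle1 hγ.le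
          _ = γ * V := by ring
      calc (X.card : ℝ) ≤ P.card * t := h1.trans h2
        _ ≤ B ^ 2 * t := mul_le_mul_of_nonneg_right h3 htnn
        _ ≤ γ * V := h4
    · intro u v hu hv
      have := hbig u.1 (ψ u) v.1 (ψ v) (hmemX u hu) (hmemX v hv)
      exact this
end

section
/- For every finite simple graph H and all weighted graphs G1^μ1 and G2^μ2, one has |s(H; G1^μ1) − s(H; G2^μ2)| ≤ |V(H)|² · d1(G1^μ1, G2^μ2). -/
open Finset
open scoped Classical

/-! ### Auxiliary lemmas -/

lemma lemM {α β γ : Type} [Fintype α] [Fintype β] [Fintype γ] [DecidableEq γ] (π : β → γ)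
    (μ : β → ℝ) (c : (α → γ) → ℝ) :
    ∑ ψ : α → β, c (π ∘ ψ) * ∏ v, μ (ψ v) =
      ∑ χ : α → γ, c χ * ∏ v, (∑ u ∈ univ.filter (fun u => π u = χ v), μ u) := by
  rw [← Finset.sum_fiberwise univ (fun ψ : α → β => π ∘ ψ)
      (fun ψ => c (π ∘ ψ) * ∏ v, μ (ψ v))]
  refine Finset.sum_congr rfl fun χ _ => ?_
  rw [Finset.prod_univ_sum, Finset.mul_sum]
  refine Finset.sum_nbij' id id ?_ ?_ (fun _ _ => rfl) (fun _ _ => rfl) ?_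
  · intro ψ hψ
    simp only [Finset.mem_filter, Finset.mem_univ, true_and] at hψ
    simp only [id, Fintype.mem_piFinset, Finset.mem_filter, Finset.mem_univ, true_and]
    intro v; exact congrFun hψ v
  · intro ψ hψ
    simp only [Fintype.mem_piFinset, Finset.mem_filter, Finset.mem_univ, true_and] at hψ
    simp only [id, Finset.mem_filter, Finset.mem_univ, true_and]
    funext v; exact hψ v
  · intro ψ hψ
    simp only [Finset.mem_filter, Finset.mem_univ, true_and] at hψ
    simp only [id]
    rw [hψ]

lemma point_marg {α β : Type} [Fintype α] [Fintype β] (μ : β → ℝ) (hsum : ∑ b, μ b = 1)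
    {p1 p2 : α} (hne : p1 ≠ p2) (a b : β) :
    ∑ ψ : α → β, (∏ v, μ (ψ v)) * (if ψ p1 = a then (1:ℝ) else 0) *
      (if ψ p2 = b then (1:ℝ) else 0) = μ a * μ b := by
  simp_rw [mul_assoc]
  have key : ∀ ψ : α → β, (∏ v, μ (ψ v)) * ((if ψ p1 = a then (1:ℝ) else 0) *
      (if ψ p2 = b then (1:ℝ) else 0)) =
      ∏ v, (μ (ψ v) * ((if v = p1 then (if ψ v = a then (1:ℝ) else 0) else 1) *
        (if v = p2 then (if ψ v = b then (1:ℝ) else 0) else 1))) := by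
    intro ψ
    rw [Finset.prod_mul_distrib, Finset.prod_mul_distrib, Finset.prod_ite_eq',
      Finset.prod_ite_eq']
    simp
  simp_rw [key]
  have := Finset.prod_univ_sum (fun _ : α => (univ : Finset β))
    (fun v x => μ x * ((if v = p1 then (if x = a then (1:ℝ) else 0) else 1) *
      (if v = p2 then (if x = b then (1:ℝ) else 0) else 1)))
  rw [Fintype.piFinset_univ] at this
  rw [← this]
  have hcol : ∀ v : α, (∑ x : β, μ x * ((if v = p1 then (if x = a then (1:ℝ) else 0) else 1) *
      (if v = p2 then (if x = b then (1:ℝ) else 0) else 1))) =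
      (if v = p1 then μ a else if v = p2 then μ b else 1) := by
    intro v
    by_cases h1 : v = p1
    · subst h1
      simp [hne, mul_ite, mul_comm]
    · by_cases h2 : v = p2
      · subst h2
        simp [h1, mul_ite, mul_comm]
      · simp [h1, h2, hsum]
  rw [Finset.prod_congr rfl (fun v _ => hcol v)]
  rw [← Finset.mul_prod_erase univ _ (Finset.mem_univ p1)]
  rw [← Finset.mul_prod_erase _ _ (Finset.mem_erase.2 ⟨Ne.symm hne, Finset.mem_univ p2⟩)]
  rw [if_pos rfl, if_neg (Ne.symm hne), if_pos rfl]
  rw [Finset.prod_eq_one]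
  · ring
  · intro v hv
    simp only [Finset.mem_erase] at hv
    rw [if_neg hv.1, if_neg hv.2.1]

lemma lemM2 {α β : Type} [Fintype α] [Fintype β] (μ : β → ℝ) (hsum : ∑ b, μ b = 1)
    {p1 p2 : α} (hne : p1 ≠ p2) (c : β → β → ℝ) :
    ∑ ψ : α → β, (∏ v, μ (ψ v)) * c (ψ p1) (ψ p2) =
      ∑ a : β, ∑ b : β, μ a * μ b * c a b := by
  have : ∀ ψ : α → β, c (ψ p1) (ψ p2) =
      ∑ a : β, ∑ b : β, ((if ψ p1 = a then (1:ℝ) else 0) *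
        (if ψ p2 = b then (1:ℝ) else 0)) * c a b := by
    intro ψ
    rw [Finset.sum_eq_single (ψ p1)]
    · rw [Finset.sum_eq_single (ψ p2)] <;> simp +contextual [eq_comm]
    · intro b' _ hb'; simp [Ne.symm hb']
    · simp
  simp_rw [this, Finset.mul_sum]
  rw [Finset.sum_comm]
  refine Finset.sum_congr rfl fun a _ => ?_
  rw [Finset.sum_comm]
  refine Finset.sum_congr rfl fun b _ => ?_
  simp_rw [← mul_assoc]
  rw [← Finset.sum_mul, point_marg μ hsum hne a b]

lemma sdensity_push {α β : Type} (m : ℕ) [Fintype α] [Fintype β]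
    (H : SimpleGraph α) (G : SimpleGraph β) (T : SimpleGraph (Fin m)) (π : β → Fin m)
    (hπ : IsStrongHom G T π) (μ : β → ℝ) :
    sdensity H G μ = ∑ χ : α → Fin m, (if IsStrongHom H T χ then (1:ℝ) else 0) *
      ∏ v, (∑ u ∈ univ.filter (fun u => π u = χ v), μ u) := by
  have h := lemM π μ (fun χ => if IsStrongHom H T χ then (1:ℝ) else 0)
  rw [← h]
  unfold sdensity
  refine Finset.sum_congr rfl fun ψ _ => ?_
  have hiff : IsStrongHom H G ψ ↔ IsStrongHom H T (π ∘ ψ) := by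
    constructor
    · intro h u v; exact (h u v).trans (hπ (ψ u) (ψ v))
    · intro h u v; exact (h u v).trans (hπ (ψ u) (ψ v)).symm
  by_cases h : IsStrongHom H G ψ
  · rw [if_pos h, if_pos (hiff.1 h), one_mul]
  · rw [if_neg h, if_neg (fun hc => h (hiff.2 hc)), zero_mul]

lemma sdensity_wequiv {α β γ : Type} [Fintype α] [Fintype β] [Fintype γ]
    (H : SimpleGraph α) (G1 : SimpleGraph β) (μ1 : β → ℝ) (G2 : SimpleGraph γ) (μ2 : γ → ℝ)
    (h : WEquiv G1 μ1 G2 μ2) : sdensity H G1 μ1 = sdensity H G2 μ2 := by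
  obtain ⟨m, T, π1, π2, _, hs1, hs2, _, _, hfib⟩ := h
  rw [sdensity_push (α := α) m H G1 T π1 hs1 μ1, sdensity_push (α := α) m H G2 T π2 hs2 μ2]
  refine Finset.sum_congr rfl fun χ _ => ?_
  congr 1
  exact Finset.prod_congr rfl fun v _ => hfib (χ v)

noncomputable def hybrid {α β : Type} [Fintype α] [Fintype β] (H : SimpleGraph α)
    (F1 F2 : SimpleGraph β) (μ : β → ℝ) (S : Finset (α × α)) : ℝ :=
  ∑ ψ : α → β, if (∀ p ∈ S, (H.Adj p.1 p.2 ↔ F1.Adj (ψ p.1) (ψ p.2))) ∧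
      (∀ p ∉ S, (H.Adj p.1 p.2 ↔ F2.Adj (ψ p.1) (ψ p.2)))
    then ∏ v, μ (ψ v) else 0

lemma hybrid_univ {α β : Type} [Fintype α] [Fintype β] (H : SimpleGraph α)
    (F1 F2 : SimpleGraph β) (μ : β → ℝ) :
    hybrid H F1 F2 μ univ = sdensity H F1 μ := by
  unfold hybrid sdensity
  refine Finset.sum_congr rfl fun ψ _ => ?_
  congr 1
  simp only [Finset.mem_univ, not_true_eq_false, IsEmpty.forall_iff, forall_const, and_true,
    true_implies, eq_iff_iff]
  constructor
  · intro h; exact fun u v => h.1 (u, v)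
  · intro h; exact ⟨fun p => h p.1 p.2, fun _ => trivial⟩

lemma hybrid_empty {α β : Type} [Fintype α] [Fintype β] (H : SimpleGraph α)
    (F1 F2 : SimpleGraph β) (μ : β → ℝ) :
    hybrid H F1 F2 μ ∅ = sdensity H F2 μ := by
  unfold hybrid sdensity
  refine Finset.sum_congr rfl fun ψ _ => ?_
  congr 1
  simp only [Finset.notMem_empty, IsEmpty.forall_iff, forall_const, true_and, true_implies,
    not_false_iff, eq_iff_iff]
  constructor
  · intro h; exact fun u v => h.2 (u, v)
  · intro h; exact ⟨fun _ => trivial, fun p => h p.1 p.2⟩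

lemma hybrid_step {α β : Type} [Fintype α] [Fintype β] (H : SimpleGraph α)
    (F1 F2 : SimpleGraph β) (μ : β → ℝ) (hpos : ∀ b, 0 ≤ μ b) (hsum : ∑ b, μ b = 1)
    (p : α × α) (S : Finset (α × α)) (hp : p ∉ S) :
    |hybrid H F1 F2 μ (insert p S) - hybrid H F1 F2 μ S| ≤
      ∑ a : β, ∑ b : β, μ a * μ b *
        |(if F1.Adj a b then (1:ℝ) else 0) - (if F2.Adj a b then (1:ℝ) else 0)| := by
  set D := ∑ a : β, ∑ b : β, μ a * μ b *
    |(if F1.Adj a b then (1:ℝ) else 0) - (if F2.Adj a b then (1:ℝ) else 0)| with hD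
  have hprodnn : ∀ ψ : α → β, 0 ≤ ∏ v, μ (ψ v) := fun ψ => Finset.prod_nonneg fun v _ => hpos _
  have key : ∀ ψ : α → β,
      |(if (∀ q ∈ insert p S, (H.Adj q.1 q.2 ↔ F1.Adj (ψ q.1) (ψ q.2))) ∧
          (∀ q ∉ insert p S, (H.Adj q.1 q.2 ↔ F2.Adj (ψ q.1) (ψ q.2)))
        then ∏ v, μ (ψ v) else 0) -
        (if (∀ q ∈ S, (H.Adj q.1 q.2 ↔ F1.Adj (ψ q.1) (ψ q.2))) ∧
          (∀ q ∉ S, (H.Adj q.1 q.2 ↔ F2.Adj (ψ q.1) (ψ q.2)))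
        then ∏ v, μ (ψ v) else 0)| ≤
      (∏ v, μ (ψ v)) *
        |(if F1.Adj (ψ p.1) (ψ p.2) then (1:ℝ) else 0) -
          (if F2.Adj (ψ p.1) (ψ p.2) then (1:ℝ) else 0)| := by
    intro ψ
    by_cases hc : F1.Adj (ψ p.1) (ψ p.2) ↔ F2.Adj (ψ p.1) (ψ p.2)
    · have hiff : ((∀ q ∈ insert p S, (H.Adj q.1 q.2 ↔ F1.Adj (ψ q.1) (ψ q.2))) ∧
          (∀ q ∉ insert p S, (H.Adj q.1 q.2 ↔ F2.Adj (ψ q.1) (ψ q.2)))) ↔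
          ((∀ q ∈ S, (H.Adj q.1 q.2 ↔ F1.Adj (ψ q.1) (ψ q.2))) ∧
          (∀ q ∉ S, (H.Adj q.1 q.2 ↔ F2.Adj (ψ q.1) (ψ q.2)))) := by
        constructor
        · rintro ⟨hA, hB⟩
          refine ⟨fun q hq => hA q (Finset.mem_insert_of_mem hq), fun q hq => ?_⟩
          by_cases hqp : q = p
          · subst hqp
            exact (hA q (Finset.mem_insert_self _ _)).trans hc
          · exact hB q (by simp [hqp, hq])
        · rintro ⟨hA, hB⟩
          constructor
          · intro q hq
            rcases Finset.mem_insert.1 hq with h | h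
            · subst h; exact (hB q hp).trans hc.symm
            · exact hA q h
          · intro q hq
            exact hB q (fun hq' => hq (Finset.mem_insert_of_mem hq'))
      rw [if_congr hiff rfl rfl, sub_self, abs_zero]
      exact mul_nonneg (hprodnn ψ) (abs_nonneg _)
    · have h1 : |(if F1.Adj (ψ p.1) (ψ p.2) then (1:ℝ) else 0) -
          (if F2.Adj (ψ p.1) (ψ p.2) then (1:ℝ) else 0)| = 1 := by
        by_cases h1 : F1.Adj (ψ p.1) (ψ p.2) <;> by_cases h2 : F2.Adj (ψ p.1) (ψ p.2) <;>
          simp_all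
      rw [h1, mul_one]
      have := hprodnn ψ
      split_ifs <;> simp_all [abs_le]
  calc |hybrid H F1 F2 μ (insert p S) - hybrid H F1 F2 μ S|
      ≤ ∑ ψ : α → β, (∏ v, μ (ψ v)) *
        |(if F1.Adj (ψ p.1) (ψ p.2) then (1:ℝ) else 0) -
          (if F2.Adj (ψ p.1) (ψ p.2) then (1:ℝ) else 0)| := by
        unfold hybrid
        rw [← Finset.sum_sub_distrib]
        exact (Finset.abs_sum_le_sum_abs _ _).trans (Finset.sum_le_sum fun ψ _ => key ψ)
    _ ≤ D := by
        by_cases hne : p.1 = p.2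
        · have : ∀ ψ : α → β, (∏ v, μ (ψ v)) *
              |(if F1.Adj (ψ p.1) (ψ p.2) then (1:ℝ) else 0) -
                (if F2.Adj (ψ p.1) (ψ p.2) then (1:ℝ) else 0)| = 0 := by
            intro ψ
            rw [hne]
            simp
          rw [Finset.sum_congr rfl fun ψ _ => this ψ, Finset.sum_const, smul_zero]
          refine Finset.sum_nonneg fun a _ => Finset.sum_nonneg fun b _ =>
            mul_nonneg (mul_nonneg (hpos a) (hpos b)) (abs_nonneg _)
        · rw [lemM2 μ hsum hne (fun a b => |(if F1.Adj a b then (1:ℝ) else 0) -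
            (if F2.Adj a b then (1:ℝ) else 0)|)]

lemma hybrid_telescope {α β : Type} [Fintype α] [Fintype β] (H : SimpleGraph α)
    (F1 F2 : SimpleGraph β) (μ : β → ℝ) (hpos : ∀ b, 0 ≤ μ b) (hsum : ∑ b, μ b = 1)
    (S : Finset (α × α)) :
    |hybrid H F1 F2 μ S - hybrid H F1 F2 μ ∅| ≤ (S.card : ℝ) *
      ∑ a : β, ∑ b : β, μ a * μ b *
        |(if F1.Adj a b then (1:ℝ) else 0) - (if F2.Adj a b then (1:ℝ) else 0)| := by
  induction S using Finset.induction_on with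
  | empty => simp
  | @insert p S hp ih =>
    calc |hybrid H F1 F2 μ (insert p S) - hybrid H F1 F2 μ ∅|
        ≤ |hybrid H F1 F2 μ (insert p S) - hybrid H F1 F2 μ S| +
          |hybrid H F1 F2 μ S - hybrid H F1 F2 μ ∅| := abs_sub_le _ _ _
      _ ≤ (∑ a : β, ∑ b : β, μ a * μ b *
            |(if F1.Adj a b then (1:ℝ) else 0) - (if F2.Adj a b then (1:ℝ) else 0)|) +
          (S.card : ℝ) * ∑ a : β, ∑ b : β, μ a * μ b *
            |(if F1.Adj a b then (1:ℝ) else 0) - (if F2.Adj a b then (1:ℝ) else 0)| :=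
          add_le_add (hybrid_step H F1 F2 μ hpos hsum p S hp) ih
      _ = ((insert p S).card : ℝ) * ∑ a : β, ∑ b : β, μ a * μ b *
            |(if F1.Adj a b then (1:ℝ) else 0) - (if F2.Adj a b then (1:ℝ) else 0)| := by
          rw [Finset.card_insert_of_notMem hp]
          push_cast
          ring

lemma sdensity_diff_le {α β : Type} [Fintype α] [Fintype β] (H : SimpleGraph α)
    (F1 F2 : SimpleGraph β) (μ : β → ℝ) (hpos : ∀ b, 0 ≤ μ b) (hsum : ∑ b, μ b = 1) :
    |sdensity H F1 μ - sdensity H F2 μ| ≤ (Fintype.card α : ℝ) ^ 2 *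
      ∑ a : β, ∑ b : β, μ a * μ b *
        |(if F1.Adj a b then (1:ℝ) else 0) - (if F2.Adj a b then (1:ℝ) else 0)| := by
  rw [← hybrid_univ H F1 F2 μ, ← hybrid_empty H F1 F2 μ]
  have h := hybrid_telescope H F1 F2 μ hpos hsum univ
  have hcard : ((univ : Finset (α × α)).card : ℝ) = (Fintype.card α : ℝ) ^ 2 := by
    rw [Finset.card_univ, Fintype.card_prod]
    push_cast
    ring
  rwa [hcard] at h

/-! ### Twin-free quotient -/

def twinSetoid {β : Type} (G : SimpleGraph β) : Setoid β where
  r u v := ∀ w, G.Adj u w ↔ G.Adj v w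
  iseqv := ⟨fun _ _ => Iff.rfl, fun h w => (h w).symm, fun h1 h2 w => (h1 w).trans (h2 w)⟩

def quotGraph {β : Type} (G : SimpleGraph β) : SimpleGraph (Quotient (twinSetoid G)) where
  Adj x y := Quotient.liftOn₂ x y (fun u v => G.Adj u v)
    (fun u v u' v' hu hv => propext
      (((hu v).trans (G.adj_comm u' v)).trans ((hv u').trans (G.adj_comm v' u'))))
  symm := by
    refine ⟨?_⟩
    intro x y
    refine Quotient.inductionOn₂ x y ?_
    intro u v h
    exact G.adj_symm h
  loopless := by
    refine ⟨?_⟩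
    intro x
    refine Quotient.inductionOn x ?_
    intro u h
    exact G.irrefl h

lemma quot_twinfree {β : Type} (G : SimpleGraph β) : IsTwinFree (quotGraph G) := by
  intro x y
  refine Quotient.inductionOn₂ x y ?_
  intro u v h
  exact Quotient.sound fun w => h (Quotient.mk _ w)

lemma wequiv_of_hom {β δ : Type} [Fintype β] [Fintype δ] (G : SimpleGraph β) (F : SimpleGraph δ)
    (p : δ → β) (hp : IsStrongHom F G p) (hps : Function.Surjective p)
    (μG : β → ℝ) (μF : δ → ℝ)
    (hfib : ∀ u : β, ∑ a ∈ univ.filter (fun a => p a = u), μF a = μG u) :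
    WEquiv F μF G μG := by
  haveI : DecidableEq (Quotient (twinSetoid G)) := Classical.decEq _
  haveI : Fintype (Quotient (twinSetoid G)) :=
    Fintype.ofSurjective (Quotient.mk _) (fun q => Quotient.exists_rep q)
  set m := Fintype.card (Quotient (twinSetoid G)) with hm
  let e : Quotient (twinSetoid G) ≃ Fin m := Fintype.equivFin _
  refine ⟨m, (quotGraph G).comap e.symm, (fun a => e (Quotient.mk _ (p a))),
    (fun u => e (Quotient.mk _ u)), ?_, ?_, ?_, ?_, ?_, ?_⟩
  · intro i j h
    have : e.symm i = e.symm j := by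
      apply quot_twinfree G
      intro w
      have := h (e w)
      simpa [SimpleGraph.comap] using this
    have := congrArg e this
    simpa using this
  · intro a b
    exact (hp a b).trans (by simp [SimpleGraph.comap, quotGraph])
  · intro u v
    simp [SimpleGraph.comap, quotGraph]
  · intro i
    obtain ⟨u, hu⟩ := Quotient.exists_rep (e.symm i)
    obtain ⟨a, ha⟩ := hps u
    exact ⟨a, by simp only []; rw [ha, hu]; simp⟩
  · intro i
    obtain ⟨u, hu⟩ := Quotient.exists_rep (e.symm i)
    exact ⟨u, by simp only []; rw [hu]; simp⟩
  · intro t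
    rw [Finset.sum_filter, Finset.sum_filter]
    rw [← Finset.sum_fiberwise univ p (fun a => if e (Quotient.mk _ (p a)) = t then μF a else 0)]
    refine Finset.sum_congr rfl fun u _ => ?_
    have : ∀ a ∈ univ.filter (fun a => p a = u),
        (if e (Quotient.mk _ (p a)) = t then μF a else 0) =
        (if e (Quotient.mk _ u) = t then μF a else 0) := by
      intro a ha
      simp only [Finset.mem_filter, Finset.mem_univ, true_and] at ha
      rw [ha]
    rw [Finset.sum_congr rfl this]
    by_cases h : e (Quotient.mk (twinSetoid G) u) = t
    · simp only [if_pos h]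
      exact hfib u
    · simp only [if_neg h, Finset.sum_const, smul_zero]

theorem stmt12 {α β γ : Type} [Fintype α] [Fintype β] [Fintype γ]
    (H : SimpleGraph α) (G1 : SimpleGraph β) (μ1 : β → ℝ) (G2 : SimpleGraph γ)
    (μ2 : γ → ℝ) (h1 : IsWeight μ1) (h2 : IsWeight μ2) :
    |sdensity H G1 μ1 - sdensity H G2 μ2| ≤
      (Fintype.card α : ℝ) ^ 2 * d1dist G1 μ1 G2 μ2 := by
  have hne1 : Nonempty β := by
    by_contra h
    rw [not_nonempty_iff] at h
    have := h1.2
    rw [Finset.univ_eq_empty, Finset.sum_empty] at this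
    exact one_ne_zero this.symm
  have hne2 : Nonempty γ := by
    by_contra h
    rw [not_nonempty_iff] at h
    have := h2.2
    rw [Finset.univ_eq_empty, Finset.sum_empty] at this
    exact one_ne_zero this.symm
  set m0 := Fintype.card (β × γ) with hm0
  let e : Fin m0 ≃ β × γ := (Fintype.equivFin (β × γ)).symm
  let μ : Fin m0 → ℝ := fun x => μ1 (e x).1 * μ2 (e x).2
  let F1 : SimpleGraph (Fin m0) := G1.comap (fun x => (e x).1)
  let F2 : SimpleGraph (Fin m0) := G2.comap (fun x => (e x).2)
  have hw : IsWeight μ := by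
    constructor
    · intro x
      exact mul_pos (h1.1 _) (h2.1 _)
    · have : ∑ x : Fin m0, μ x = ∑ bc : β × γ, μ1 bc.1 * μ2 bc.2 :=
        Equiv.sum_comp e (fun bc => μ1 bc.1 * μ2 bc.2)
      rw [this, Fintype.sum_prod_type]
      simp_rw [← Finset.mul_sum, h2.2, mul_one]
      exact h1.2
  have hfib1 : ∀ u : β, ∑ x ∈ univ.filter (fun x => (e x).1 = u), μ x = μ1 u := by
    intro u
    calc ∑ x ∈ univ.filter (fun x => (e x).1 = u), μ x
        = ∑ x : Fin m0, if ((e x).1 = u) then μ1 (e x).1 * μ2 (e x).2 else 0 :=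
          Finset.sum_filter _ _
      _ = ∑ bc : β × γ, if (bc.1 = u) then μ1 bc.1 * μ2 bc.2 else 0 :=
          Equiv.sum_comp e (fun bc => if bc.1 = u then μ1 bc.1 * μ2 bc.2 else 0)
      _ = ∑ b : β, ∑ c : γ, if (b = u) then μ1 b * μ2 c else 0 := Fintype.sum_prod_type _
      _ = ∑ b : β, if (b = u) then μ1 b else 0 := by
          refine Finset.sum_congr rfl fun b _ => ?_
          by_cases hb : b = u
          · rw [if_pos hb]
            simp_rw [if_pos hb]
            rw [← Finset.mul_sum, h2.2, mul_one]
          · simp [hb]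
      _ = μ1 u := by rw [Finset.sum_ite_eq' univ u μ1, if_pos (Finset.mem_univ u)]
  have hfib2 : ∀ u : γ, ∑ x ∈ univ.filter (fun x => (e x).2 = u), μ x = μ2 u := by
    intro u
    calc ∑ x ∈ univ.filter (fun x => (e x).2 = u), μ x
        = ∑ x : Fin m0, if ((e x).2 = u) then μ1 (e x).1 * μ2 (e x).2 else 0 :=
          Finset.sum_filter _ _
      _ = ∑ bc : β × γ, if (bc.2 = u) then μ1 bc.1 * μ2 bc.2 else 0 :=
          Equiv.sum_comp e (fun bc => if bc.2 = u then μ1 bc.1 * μ2 bc.2 else 0)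
      _ = ∑ b : β, ∑ c : γ, if (c = u) then μ1 b * μ2 c else 0 := Fintype.sum_prod_type _
      _ = ∑ b : β, μ1 b * μ2 u := by
          refine Finset.sum_congr rfl fun b _ => ?_
          rw [Finset.sum_ite_eq' univ u (fun c => μ1 b * μ2 c), if_pos (Finset.mem_univ u)]
      _ = μ2 u := by rw [← Finset.sum_mul, h1.2, one_mul]
  have he1 : WEquiv F1 μ G1 μ1 :=
    wequiv_of_hom G1 F1 (fun x => (e x).1) (fun a b => Iff.rfl)
      (fun u => ⟨e.symm (u, Classical.arbitrary γ), by simp⟩) μ1 μ hfib1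
  have he2 : WEquiv F2 μ G2 μ2 :=
    wequiv_of_hom G2 F2 (fun x => (e x).2) (fun a b => Iff.rfl)
      (fun u => ⟨e.symm (Classical.arbitrary β, u), by simp⟩) μ2 μ hfib2
  set x0 : ℝ := ∑ u : Fin m0, ∑ v : Fin m0, μ u * μ v *
    |(if F1.Adj u v then (1:ℝ) else 0) - (if F2.Adj u v then (1:ℝ) else 0)| with hx0def
  set S : Set ℝ := {x : ℝ | ∃ (m : ℕ) (F1 F2 : SimpleGraph (Fin m)) (μ : Fin m → ℝ),
    IsWeight μ ∧ WEquiv F1 μ G1 μ1 ∧ WEquiv F2 μ G2 μ2 ∧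
    x = ∑ u : Fin m, ∑ v : Fin m, μ u * μ v *
      |(if F1.Adj u v then (1:ℝ) else 0) - (if F2.Adj u v then (1:ℝ) else 0)|} with hSdef
  have hx0 : x0 ∈ S := ⟨m0, F1, F2, μ, hw, he1, he2, rfl⟩
  have claim : ∀ x ∈ S, |sdensity H G1 μ1 - sdensity H G2 μ2| ≤ (Fintype.card α : ℝ) ^ 2 * x := by
    rintro x ⟨m, Fa, Fb, ν, hw', hea, heb, rfl⟩
    rw [← sdensity_wequiv H Fa ν G1 μ1 hea, ← sdensity_wequiv H Fb ν G2 μ2 heb]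
    exact sdensity_diff_le H Fa Fb ν (fun b => (hw'.1 b).le) hw'.2
  have hd : d1dist G1 μ1 G2 μ2 = sInf S := rfl
  rw [hd]
  by_cases hcard : (Fintype.card α : ℝ) ^ 2 = 0
  · rw [hcard, zero_mul]
    have := claim x0 hx0
    rwa [hcard, zero_mul] at this
  · have hpos : 0 < (Fintype.card α : ℝ) ^ 2 :=
      lt_of_le_of_ne (by positivity) (Ne.symm hcard)
    have hlow : |sdensity H G1 μ1 - sdensity H G2 μ2| / (Fintype.card α : ℝ) ^ 2 ≤ sInf S := by
      refine le_csInf ⟨x0, hx0⟩ fun x hx => ?_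
      rw [div_le_iff₀ hpos, mul_comm]
      exact claim x hx
    rw [div_le_iff₀ hpos, mul_comm] at hlow
    exact hlow
end
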